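/- For every 0 < s < 1 and every x > 0, (x/(x+s))^{1−s} ≤ Γ(x+s)/(x^s Γ(x)). -/
import Mathlib

theorem wendel_inequality (s x : ℝ) (hs : 0 < s) (hs1 : s < 1) (hx : 0 < x) :
    (x / (x + s)) ^ (1 - s) ≤ Real.Gamma (x + s) / (x ^ s * Real.Gamma x) := by
  have hxs : 0 < x + s := by linarith
  have hG : 0 < Real.Gamma (x + s) := Real.Gamma_pos_of_pos hxs
  have hGx : 0 < Real.Gamma x := Real.Gamma_pos_of_pos hx
  have key : Real.Gamma (x + 1) ≤ Real.Gamma (x + s) ^ s * Real.Gamma (x + s + 1) ^ (1 - s) := by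
    have := Real.Gamma_mul_add_mul_le_rpow_Gamma_mul_rpow_Gamma (s := x + s) (t := x + s + 1)
      (a := s) (b := 1 - s) hxs (by linarith) hs (by linarith) (by ring)
    have h1 : s * (x + s) + (1 - s) * (x + s + 1) = x + 1 := by ring
    rwa [h1] at this
  rw [Real.Gamma_add_one (by positivity), Real.Gamma_add_one (by positivity)] at key
  have key2 : x * Real.Gamma x ≤ (x + s) ^ (1 - s) * Real.Gamma (x + s) := by
    calc x * Real.Gamma x ≤ Real.Gamma (x + s) ^ s * ((x + s) * Real.Gamma (x + s)) ^ (1 - s) :=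
          key
      _ = (x + s) ^ (1 - s) * Real.Gamma (x + s) := by
          rw [Real.mul_rpow hxs.le hG.le, ← mul_assoc,
            mul_comm (Real.Gamma (x + s) ^ s), mul_assoc, ← Real.rpow_add hG]
          norm_num
  rw [Real.div_rpow hx.le hxs.le, div_le_div_iff₀ (by positivity) (by positivity)]
  calc x ^ (1 - s) * (x ^ s * Real.Gamma x) = x ^ (1 - s + s) * Real.Gamma x := by
        rw [Real.rpow_add hx]; ring
    _ = x * Real.Gamma x := by norm_num
    _ ≤ (x + s) ^ (1 - s) * Real.Gamma (x + s) := key2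
    _ = Real.Gamma (x + s) * (x + s) ^ (1 - s) := by ring
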